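/- (Local error of the midpoint scheme against the Wong–Zakai approximation; Step 1 of the proof of Theorem 5.2.) Let n ≥ 1, d ≥ 0, and let V₀, …, V_d : ℝⁿ → ℝⁿ be twice continuously differentiable with ‖Vᵢ(y)‖ ≤ ν, ‖DVᵢ(y)‖ ≤ ν, ‖D²Vᵢ(y)‖ ≤ ν for all y and i. Fix ξ = (ξ₀, …, ξ_d) ∈ ℝ^{d+1} and set W(y) = ∑_{i=0}^{d} ξᵢ Vᵢ(y). Let y : [0, 1] → ℝⁿ be differentiable with y'(u) = W(y(u)) for all u ∈ [0, 1] and y(0) = Y₀, and suppose Z ∈ ℝⁿ satisfies Z = Y₀ + (1/2) W(Z), with Y₁ = Y₀ + W(Z). Then there is a constant C, depending only on ν, d, and n, such that ‖Y₁ − y(1)‖ ≤ C (‖ξ‖³ + ‖ξ‖⁴). -/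

import Mathlib

open Set intervalIntegral MeasureTheory

section aux
variable {E F : Type*} [NormedAddCommGroup E] [NormedSpace ℝ E]
  [NormedAddCommGroup F] [NormedSpace ℝ F]

lemma aux_lip (f : E → F) (hf : Differentiable ℝ f) {c : ℝ}
    (h : ∀ x, ‖fderiv ℝ f x‖ ≤ c) (x a : E) : ‖f x - f a‖ ≤ c * ‖x - a‖ :=
  convex_univ.norm_image_sub_le_of_norm_fderiv_le (fun z _ => hf z)
    (fun z _ => h z) (mem_univ a) (mem_univ x)

lemma aux_norm_fderiv_fderiv (f : E → F) (x : E) :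
    ‖fderiv ℝ (fderiv ℝ f) x‖ = ‖iteratedFDeriv ℝ 2 f x‖ := by
  calc ‖fderiv ℝ (fderiv ℝ f) x‖
      = ‖iteratedFDeriv ℝ 0 (fderiv ℝ (fderiv ℝ f)) x‖ := by rw [norm_iteratedFDeriv_zero]
    _ = ‖iteratedFDeriv ℝ 1 (fderiv ℝ f) x‖ := norm_iteratedFDeriv_fderiv
    _ = ‖iteratedFDeriv ℝ 2 f x‖ := norm_iteratedFDeriv_fderiv

lemma aux_taylor (f : E → F) (hf : ContDiff ℝ 2 f) {c : ℝ}
    (h2 : ∀ x, ‖iteratedFDeriv ℝ 2 f x‖ ≤ c) (x a : E) :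
    ‖f x - f a - fderiv ℝ f a (x - a)‖ ≤ c * ‖x - a‖ ^ 2 := by
  have hc : 0 ≤ c := (norm_nonneg _).trans (h2 a)
  have hf1 : Differentiable ℝ f := hf.differentiable (by norm_num)
  have hfd : Differentiable ℝ (fderiv ℝ f) :=
    (hf.fderiv_right (m := 1) (by norm_num)).differentiable (by simp)
  have hlip : ∀ z : E, ‖fderiv ℝ f z - fderiv ℝ f a‖ ≤ c * ‖z - a‖ := fun z =>
    aux_lip (fderiv ℝ f) hfd (fun w => le_of_eq_of_le (aux_norm_fderiv_fderiv f w) (h2 w)) z a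
  have hseg : ∀ z ∈ segment ℝ a x, ‖z - a‖ ≤ ‖x - a‖ := by
    intro z hz
    rw [segment_eq_image'] at hz
    obtain ⟨t, ht, rfl⟩ := hz
    simp only [add_sub_cancel_left, norm_smul, Real.norm_eq_abs, abs_of_nonneg ht.1]
    nlinarith [norm_nonneg (x - a), ht.2]
  have key := (convex_segment a x).norm_image_sub_le_of_norm_hasFDerivWithin_le
    (f := fun z => f z - fderiv ℝ f a z)
    (f' := fun z => fderiv ℝ f z - fderiv ℝ f a)
    (fun z _ => (((hf1 z).hasFDerivAt).sub ((fderiv ℝ f a).hasFDerivAt)).hasFDerivWithinAt)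
    (fun z hz => (hlip z).trans (mul_le_mul_of_nonneg_left (hseg z hz) hc))
    (left_mem_segment ℝ a x) (right_mem_segment ℝ a x)
  have heq : (f x - fderiv ℝ f a x) - (f a - fderiv ℝ f a a)
      = f x - f a - fderiv ℝ f a (x - a) := by
    rw [(fderiv ℝ f a).map_sub]; abel
  rw [heq] at key
  calc ‖f x - f a - fderiv ℝ f a (x - a)‖ ≤ c * ‖x - a‖ * ‖x - a‖ := key
    _ = c * ‖x - a‖ ^ 2 := by ring

end aux

lemma aux_coord {m : ℕ} (ξ : EuclideanSpace ℝ (Fin m)) (i : Fin m) : |ξ i| ≤ ‖ξ‖ := by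
  rw [EuclideanSpace.norm_eq, ← Real.sqrt_sq_eq_abs]
  apply Real.sqrt_le_sqrt
  have := Finset.single_le_sum (f := fun j => ‖ξ j‖ ^ 2)
    (fun j _ => sq_nonneg _) (Finset.mem_univ i)
  simpa [Real.norm_eq_abs, sq_abs] using this

lemma aux_sum {m : ℕ} {F : Type*} [NormedAddCommGroup F] [NormedSpace ℝ F]
    (ξ : EuclideanSpace ℝ (Fin m)) (w : Fin m → F) {b : ℝ}
    (hw : ∀ i, ‖w i‖ ≤ b) : ‖∑ i, ξ i • w i‖ ≤ m * ‖ξ‖ * b := by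
  calc ‖∑ i, ξ i • w i‖ ≤ ∑ i, ‖ξ i • w i‖ := norm_sum_le _ _
    _ ≤ ∑ _i : Fin m, ‖ξ‖ * b := Finset.sum_le_sum fun i _ => by
        rw [norm_smul, Real.norm_eq_abs]
        exact mul_le_mul (aux_coord ξ i) (hw i) (norm_nonneg _) (norm_nonneg _)
    _ = m * ‖ξ‖ * b := by
        rw [Finset.sum_const, Finset.card_univ, Fintype.card_fin, nsmul_eq_mul]; ring

set_option maxHeartbeats 1000000 in
/-- Local error of the midpoint scheme against the Wong--Zakai approximation
(Step 1 of the proof of Theorem 5.2). The constant `C` depends only on `ν`,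
`d` and `n`. -/
theorem stmt_10 (n d : ℕ) (hn : 1 ≤ n) (ν : ℝ) :
    ∃ C : ℝ, ∀ V : Fin (d + 1) → EuclideanSpace ℝ (Fin n) → EuclideanSpace ℝ (Fin n),
      (∀ i, ContDiff ℝ 2 (V i)) →
      (∀ i y, ‖V i y‖ ≤ ν) →
      (∀ i y, ‖fderiv ℝ (V i) y‖ ≤ ν) →
      (∀ i y, ‖iteratedFDeriv ℝ 2 (V i) y‖ ≤ ν) →
      ∀ (ξ : EuclideanSpace ℝ (Fin (d + 1))) (Y₀ Z Y₁ : EuclideanSpace ℝ (Fin n))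
        (y : ℝ → EuclideanSpace ℝ (Fin n)),
        (∀ u ∈ Set.Icc (0 : ℝ) 1, HasDerivAt y (∑ i, ξ i • V i (y u)) u) →
        y 0 = Y₀ →
        Z = Y₀ + (1 / 2 : ℝ) • ∑ i, ξ i • V i Z →
        Y₁ = Y₀ + ∑ i, ξ i • V i Z →
        ‖Y₁ - y 1‖ ≤ C * (‖ξ‖ ^ 3 + ‖ξ‖ ^ 4) := by
  refine ⟨6 * (((d : ℝ) + 1) * |ν|) ^ 3, ?_⟩
  intro V hV hV0 hV1 hV2 ξ Y₀ Z Y₁ y hy hy0 hZ hY₁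
  have hν : 0 ≤ ν := (norm_nonneg _).trans (hV0 0 0)
  set ε := ‖ξ‖ with hεdef
  have hε : 0 ≤ ε := norm_nonneg _
  set A : ℝ := ((d : ℝ) + 1) * ε * ν with hAdef
  have hA : 0 ≤ A := by
    apply mul_nonneg (mul_nonneg (by positivity) hε) hν
  set W : EuclideanSpace ℝ (Fin n) → EuclideanSpace ℝ (Fin n) :=
    fun x => ∑ i, ξ i • V i x with hWdef
  have hWZ : ∀ x, W x = ∑ i, ξ i • V i x := fun x => rfl
  have hVd : ∀ i, Differentiable ℝ (V i) := fun i => (hV i).differentiable (by norm_num)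
  have hLipV : ∀ i (x a : EuclideanSpace ℝ (Fin n)), ‖V i x - V i a‖ ≤ ν * ‖x - a‖ :=
    fun i => aux_lip (V i) (hVd i) (hV1 i)
  have hTayV : ∀ i (x a : EuclideanSpace ℝ (Fin n)),
      ‖V i x - V i a - fderiv ℝ (V i) a (x - a)‖ ≤ ν * ‖x - a‖ ^ 2 :=
    fun i => aux_taylor (V i) (hV i) (hV2 i)
  -- bounds on W
  have hWb : ∀ x, ‖W x‖ ≤ A := by
    intro x
    rw [hWZ x]
    exact le_of_le_of_eq (aux_sum ξ (fun i => V i x) (fun i => hV0 i x))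
      (by rw [hAdef]; push_cast; ring)
  have hWlip : ∀ x a, ‖W x - W a‖ ≤ A * ‖x - a‖ := by
    intro x a
    have heq : W x - W a = ∑ i, ξ i • (V i x - V i a) := by
      rw [hWZ x, hWZ a]; simp [smul_sub, Finset.sum_sub_distrib]
    rw [heq]
    exact le_of_le_of_eq (aux_sum ξ _ (fun i => hLipV i x a))
      (by rw [hAdef]; push_cast; ring)
  -- the linearization at Z
  set L : EuclideanSpace ℝ (Fin n) →L[ℝ] EuclideanSpace ℝ (Fin n) :=
    ∑ i, ξ i • fderiv ℝ (V i) Z with hLdef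
  have hLnorm : ‖L‖ ≤ A := by
    rw [hLdef]
    exact le_of_le_of_eq (aux_sum ξ (fun i => fderiv ℝ (V i) Z) (fun i => hV1 i Z))
      (by rw [hAdef]; push_cast; ring)
  have hLapp : ∀ v, L v = ∑ i, ξ i • fderiv ℝ (V i) Z v := by
    intro v
    rw [hLdef]
    simp [ContinuousLinearMap.sum_apply, ContinuousLinearMap.smul_apply]
  have hWtay : ∀ x, ‖W x - W Z - L (x - Z)‖ ≤ A * ‖x - Z‖ ^ 2 := by
    intro x
    have heq : W x - W Z - L (x - Z)
        = ∑ i, ξ i • (V i x - V i Z - fderiv ℝ (V i) Z (x - Z)) := by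
      rw [hWZ x, hWZ Z, hLapp]
      simp [smul_sub, Finset.sum_sub_distrib]
    rw [heq]
    exact le_of_le_of_eq (aux_sum ξ _ (fun i => hTayV i x Z))
      (by rw [hAdef]; push_cast; ring)
  -- continuity facts
  have hycont : ContinuousOn y (Icc 0 1) := fun u hu => (hy u hu).continuousAt.continuousWithinAt
  have hWcont : Continuous W := by
    rw [hWdef]
    exact continuous_finset_sum _ fun i _ => ((hVd i).continuous).const_smul (ξ i)
  have hWycont : ContinuousOn (fun u => W (y u)) (Icc 0 1) := hWcont.comp_continuousOn hycont
  have hWyint : ∀ u ∈ Icc (0:ℝ) 1, IntervalIntegrable (fun s => W (y s)) volume 0 u := by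
    intro u hu
    apply ContinuousOn.intervalIntegrable
    apply hWycont.mono
    rw [uIcc_of_le hu.1]
    exact Icc_subset_Icc le_rfl hu.2
  -- fundamental theorem of calculus
  have hInt : ∀ u ∈ Icc (0:ℝ) 1, (∫ s in (0:ℝ)..u, W (y s)) = y u - Y₀ := by
    intro u hu
    have h1 : ∀ s ∈ uIcc (0:ℝ) u, HasDerivAt y (W (y s)) s := by
      intro s hs
      rw [uIcc_of_le hu.1] at hs
      rw [hWZ (y s)]
      exact hy s ⟨hs.1, hs.2.trans hu.2⟩
    rw [intervalIntegral.integral_eq_sub_of_hasDerivAt h1 (hWyint u hu), hy0]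
  have hyb : ∀ u ∈ Icc (0:ℝ) 1, ‖y u - Y₀‖ ≤ A := by
    intro u hu
    rw [← hInt u hu]
    have h1 : ‖∫ s in (0:ℝ)..u, W (y s)‖ ≤ A * |u - 0| :=
      intervalIntegral.norm_integral_le_of_norm_le_const (fun s _ => hWb (y s))
    have h2 : |u - 0| ≤ 1 := by rw [sub_zero, abs_of_nonneg hu.1]; exact hu.2
    calc ‖∫ s in (0:ℝ)..u, W (y s)‖ ≤ A * |u - 0| := h1
      _ ≤ A * 1 := mul_le_mul_of_nonneg_left h2 hA
      _ = A := mul_one A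
  have hZY₀ : Z - Y₀ = (1/2 : ℝ) • W Z := by
    conv_lhs => rw [hZ]
    rw [← hWZ Z]; abel
  have hZb : ‖Z - Y₀‖ ≤ (1/2) * A := by
    rw [hZY₀, norm_smul, Real.norm_eq_abs]
    have := hWb Z
    rw [abs_of_nonneg (by norm_num : (0:ℝ) ≤ 1/2)]
    nlinarith
  have hyZ : ∀ u ∈ Icc (0:ℝ) 1, ‖y u - Z‖ ≤ 2 * A := by
    intro u hu
    have heq : y u - Z = (y u - Y₀) - (Z - Y₀) := by abel
    rw [heq]
    have := norm_sub_le (y u - Y₀) (Z - Y₀)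
    have h1 := hyb u hu
    linarith
  -- midpoint estimate
  have hmid : ∀ u ∈ Icc (0:ℝ) 1, ‖y u - Y₀ - u • W Z‖ ≤ 2 * A ^ 2 := by
    intro u hu
    have h3 : y u - Y₀ - u • W Z = ∫ s in (0:ℝ)..u, (W (y s) - W Z) := by
      rw [intervalIntegral.integral_sub (hWyint u hu) intervalIntegrable_const,
        hInt u hu, intervalIntegral.integral_const, sub_zero]
    rw [h3]
    have h1 : ‖∫ s in (0:ℝ)..u, (W (y s) - W Z)‖ ≤ (2 * A ^ 2) * |u - 0| := by
      apply intervalIntegral.norm_integral_le_of_norm_le_const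
      intro s hs
      rw [uIoc_of_le hu.1] at hs
      have hs' : s ∈ Icc (0:ℝ) 1 := ⟨le_of_lt hs.1, hs.2.trans hu.2⟩
      calc ‖W (y s) - W Z‖ ≤ A * ‖y s - Z‖ := hWlip _ _
        _ ≤ A * (2 * A) := mul_le_mul_of_nonneg_left (hyZ s hs') hA
        _ = 2 * A ^ 2 := by ring
    have h2 : |u - 0| ≤ 1 := by rw [sub_zero, abs_of_nonneg hu.1]; exact hu.2
    calc ‖∫ s in (0:ℝ)..u, (W (y s) - W Z)‖ ≤ (2 * A ^ 2) * |u - 0| := h1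
      _ ≤ (2 * A ^ 2) * 1 := mul_le_mul_of_nonneg_left h2 (by positivity)
      _ = 2 * A ^ 2 := mul_one _
  -- integrability on [0,1]
  have h01 : (0:ℝ) ≤ 1 := zero_le_one
  have hmem1 : (1:ℝ) ∈ Icc (0:ℝ) 1 := ⟨h01, le_rfl⟩
  have hyint : IntervalIntegrable y volume 0 1 := by
    apply ContinuousOn.intervalIntegrable
    rwa [uIcc_of_le h01]
  have hyZint : IntervalIntegrable (fun u => y u - Z) volume 0 1 :=
    hyint.sub intervalIntegrable_const
  -- the second central quantity
  set I2 := ∫ u in (0:ℝ)..1, (y u - Z) with hI2def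
  have hI2b : ‖I2‖ ≤ 2 * A ^ 2 := by
    have hsmulint : IntervalIntegrable (fun u : ℝ => u • W Z) volume 0 1 := by
      apply ContinuousOn.intervalIntegrable
      exact (continuous_id.smul continuous_const).continuousOn
    have hJ : I2 = ∫ u in (0:ℝ)..1, (y u - Y₀ - u • W Z) := by
      rw [hI2def,
        intervalIntegral.integral_sub (hyint.sub intervalIntegrable_const) hsmulint,
        intervalIntegral.integral_sub hyint intervalIntegrable_const,
        intervalIntegral.integral_sub hyint intervalIntegrable_const,
        intervalIntegral.integral_const, intervalIntegral.integral_const,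
        intervalIntegral.integral_smul_const, integral_id]
      have hZ' : Z = Y₀ + (1/2 : ℝ) • W Z := sub_eq_iff_eq_add'.mp hZY₀
      conv_lhs => rw [hZ']
      norm_num
      module
    rw [hJ]
    have h1 : ‖∫ u in (0:ℝ)..1, (y u - Y₀ - u • W Z)‖ ≤ (2 * A ^ 2) * |1 - 0| := by
      apply intervalIntegral.norm_integral_le_of_norm_le_const
      intro s hs
      have hs' : s ∈ Icc (0:ℝ) 1 := by
        rw [uIoc_of_le h01] at hs
        exact ⟨le_of_lt hs.1, hs.2⟩
      exact hmid s hs'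
    simpa using h1
  -- the Taylor remainder integral
  have hRb : ‖∫ u in (0:ℝ)..1, (W (y u) - W Z - L (y u - Z))‖ ≤ 4 * A ^ 3 := by
    have h1 : ‖∫ u in (0:ℝ)..1, (W (y u) - W Z - L (y u - Z))‖ ≤ (4 * A ^ 3) * |1 - 0| := by
      apply intervalIntegral.norm_integral_le_of_norm_le_const
      intro s hs
      have hs' : s ∈ Icc (0:ℝ) 1 := by
        rw [uIoc_of_le h01] at hs
        exact ⟨le_of_lt hs.1, hs.2⟩
      calc ‖W (y s) - W Z - L (y s - Z)‖ ≤ A * ‖y s - Z‖ ^ 2 := hWtay _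
        _ ≤ A * (2 * A) ^ 2 := by
            apply mul_le_mul_of_nonneg_left _ hA
            exact pow_le_pow_left₀ (norm_nonneg _) (hyZ s hs') 2
        _ = 4 * A ^ 3 := by ring
    simpa using h1
  -- decomposition of the error
  have hLyZint : IntervalIntegrable (fun u => L (y u - Z)) volume 0 1 := by
    apply ContinuousOn.intervalIntegrable
    rw [uIcc_of_le h01]
    exact L.continuous.comp_continuousOn ((hycont.sub continuousOn_const))
  have hWyZint : IntervalIntegrable (fun u => W (y u) - W Z) volume 0 1 := by
    apply ContinuousOn.intervalIntegrable
    rw [uIcc_of_le h01]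
    exact hWycont.sub continuousOn_const
  have hsplit : (∫ u in (0:ℝ)..1, (W (y u) - W Z - L (y u - Z)))
      = (y 1 - Y₀) - W Z - L I2 := by
    rw [intervalIntegral.integral_sub hWyZint hLyZint,
      intervalIntegral.integral_sub ((hWyint 1 hmem1)) intervalIntegrable_const,
      hInt 1 hmem1, intervalIntegral.integral_const,
      L.intervalIntegral_comp_comm hyZint, ← hI2def]
    norm_num
  have herr : Y₁ - y 1
      = -(∫ u in (0:ℝ)..1, (W (y u) - W Z - L (y u - Z))) - L I2 := by
    rw [hsplit, hY₁, ← hWZ Z]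
    abel
  rw [herr]
  have hLI2 : ‖L I2‖ ≤ A * (2 * A ^ 2) :=
    le_trans (L.le_opNorm I2) (mul_le_mul hLnorm hI2b (norm_nonneg _) hA)
  have hfinal : ‖-(∫ u in (0:ℝ)..1, (W (y u) - W Z - L (y u - Z))) - L I2‖ ≤ 6 * A ^ 3 := by
    calc ‖-(∫ u in (0:ℝ)..1, (W (y u) - W Z - L (y u - Z))) - L I2‖
        ≤ ‖-(∫ u in (0:ℝ)..1, (W (y u) - W Z - L (y u - Z)))‖ + ‖L I2‖ := norm_sub_le _ _
      _ = ‖∫ u in (0:ℝ)..1, (W (y u) - W Z - L (y u - Z))‖ + ‖L I2‖ := by rw [norm_neg]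
      _ ≤ 4 * A ^ 3 + A * (2 * A ^ 2) := add_le_add hRb hLI2
      _ = 6 * A ^ 3 := by ring
  apply le_trans hfinal
  have hAν : A = ((d : ℝ) + 1) * |ν| * ε := by rw [hAdef, abs_of_nonneg hν]; ring
  rw [hAν]
  have : 6 * (((d : ℝ) + 1) * |ν| * ε) ^ 3 = 6 * (((d : ℝ) + 1) * |ν|) ^ 3 * ε ^ 3 := by ring
  rw [this]
  have hC : 0 ≤ 6 * (((d : ℝ) + 1) * |ν|) ^ 3 := by positivity
  nlinarith [pow_nonneg hε 3, pow_nonneg hε 4]
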